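/- arXiv:1708.02281 — 2 statements merged into one kernel-verified Lean document; each statement's English description precedes it below -/
import Mathlib

section
/- For every r ≥ 0 and every unit vector u = (u₁,u₂) ∈ ℝ², one has ∫_{-π}^{π} cos t · sin t · exp(i r (u₁ cos t + u₂ sin t)) dt = −2π u₁ u₂ J₂(r). -/
open Real MeasureTheory
open intervalIntegral

/-- Bessel function of the first kind of order `n`, defined by its power series. -/
noncomputable def besselJ (n : ℕ) (t : ℝ) : ℝ :=
  ∑' m : ℕ, ((-1 : ℝ) ^ m / (Nat.factorial m * Nat.factorial (m + n))) * (t / 2) ^ (2 * m + n)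

noncomputable def C (n : ℕ) : ℝ := ∫ t in (-π)..π, cos t ^ n

lemma C_zero : C 0 = 2 * π := by simp [C, two_mul]

lemma C_one : C 1 = 0 := by simp [C]

lemma C_rec (n : ℕ) : C (n + 2) = (n + 1) / (n + 2) * C n := by
  unfold C
  rw [integral_cos_pow]
  simp [Real.sin_pi]

lemma C_odd (m : ℕ) : C (2 * m + 1) = 0 := by
  induction m with
  | zero => simpa using C_one
  | succ k ih =>
      have : 2 * (k + 1) + 1 = (2 * k + 1) + 2 := by ring
      rw [this, C_rec, ih, mul_zero]

lemma C_even (m : ℕ) : C (2 * m) = 2 * π * (Nat.factorial (2 * m)) /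
    (4 ^ m * (Nat.factorial m) ^ 2) := by
  induction m with
  | zero => simpa using C_zero
  | succ k ih =>
      have h : 2 * (k + 1) = (2 * k) + 2 := by ring
      rw [h, C_rec, ih]
      have h1 : (Nat.factorial (2 * k) : ℝ) > 0 := by positivity
      have h2 : (Nat.factorial k : ℝ) > 0 := by positivity
      have e1 : (Nat.factorial (2 * k + 2) : ℝ) =
          (2*k+2) * (2*k+1) * Nat.factorial (2*k) := by
        have : 2 * k + 2 = (2 * k + 1) + 1 := by ring
        rw [this, Nat.factorial_succ]
        push_cast [Nat.factorial_succ]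
        ring
      have e2 : (Nat.factorial (k+1) : ℝ) = (k+1) * Nat.factorial k := by
        push_cast [Nat.factorial_succ]; ring
      rw [e1, e2]
      field_simp
      push_cast; ring

lemma T_eq (k : ℕ) : (∫ t in (-π)..π, Real.cos (2*t) * cos t ^ k) = 2 * C (k+2) - C k := by
  have h : ∀ t : ℝ, Real.cos (2*t) * cos t ^ k = 2 * cos t ^ (k+2) - cos t ^ k := by
    intro t; rw [Real.cos_two_mul]; ring
  simp_rw [h]
  rw [intervalIntegral.integral_sub ((by continuity : Continuous fun t : ℝ => 2 * cos t ^ (k+2)).intervalIntegrable _ _) ((by continuity : Continuous fun t : ℝ => cos t ^ k).intervalIntegrable _ _),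
    intervalIntegral.integral_const_mul]
  rfl

lemma key_swap (r : ℝ) (hr : 0 ≤ r) :
    (∫ t in (-π)..π, ((Real.cos (2*t) : ℝ) : ℂ) *
        Complex.exp (Complex.I * r * ((Real.cos t : ℝ) : ℂ))) =
      ∑' k : ℕ, (Complex.I * r) ^ k / (Nat.factorial k) * ((2 * C (k+2) - C k : ℝ) : ℂ) := by
  set F : ℕ → ℝ → ℂ := fun k t =>
    ((Real.cos (2*t) : ℝ) : ℂ) * ((Complex.I * r * (Real.cos t : ℝ)) ^ k / (Nat.factorial k))
    with hF
  have hπ : (-π : ℝ) ≤ π := by linarith [Real.pi_pos]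
  have hexp : ∀ t : ℝ, ((Real.cos (2*t) : ℝ) : ℂ) *
      Complex.exp (Complex.I * r * ((Real.cos t : ℝ) : ℂ)) = ∑' k : ℕ, F k t := by
    intro t
    rw [Complex.exp_eq_exp_ℂ, NormedSpace.exp_eq_tsum_div, ← tsum_mul_left]
  have hcont : ∀ k, Continuous (F k) := by
    intro k
    apply Continuous.mul
    · exact Complex.continuous_ofReal.comp (by continuity)
    · apply Continuous.div_const
      apply Continuous.pow
      exact (continuous_const.mul (Complex.continuous_ofReal.comp Real.continuous_cos))
  have hint : ∀ k, IntegrableOn (F k) (Set.Ioc (-π) π) := fun k =>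
    (hcont k).integrableOn_Ioc
  have hbound : ∀ k, ∀ t : ℝ, ‖F k t‖ ≤ r ^ k / (Nat.factorial k) := by
    intro k t
    have he : ‖F k t‖ = |Real.cos (2*t)| * ((r * |Real.cos t|) ^ k / (Nat.factorial k)) := by
      simp [hF, norm_mul, norm_div, norm_pow, Complex.norm_real, Complex.norm_I,
        Real.norm_eq_abs, abs_of_nonneg hr, Complex.norm_natCast, -Complex.ofReal_cos]
    rw [he]
    refine le_trans (mul_le_of_le_one_left (by positivity) (Real.abs_cos_le_one _)) ?_
    gcongr
    exact mul_le_of_le_one_right hr (Real.abs_cos_le_one t)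
  have hvol : (volume (Set.Ioc (-π) π)).toReal = 2 * π := by
    rw [Real.volume_Ioc, ENNReal.toReal_ofReal (by linarith [Real.pi_pos])]
    ring
  have hsum : Summable fun k => ∫ t in Set.Ioc (-π) π, ‖F k t‖ := by
    refine Summable.of_nonneg_of_le (fun k => integral_nonneg fun t => norm_nonneg _)
      (fun k => ?_) (((Real.summable_pow_div_factorial r).mul_right (2 * π)))
    have h := norm_setIntegral_le_of_norm_le_const (μ := volume)
      (s := Set.Ioc (-π) π) (f := fun t => ‖F k t‖) measure_Ioc_lt_top
      (fun t _ => by rw [norm_norm]; exact hbound k t)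
      |>.trans_eq (by rw [measureReal_def, hvol])
    exact le_trans (le_abs_self _) h
  have step : (∫ t in (-π)..π, ((Real.cos (2*t) : ℝ) : ℂ) *
      Complex.exp (Complex.I * r * ((Real.cos t : ℝ) : ℂ))) =
      ∑' k : ℕ, ∫ t in Set.Ioc (-π) π, F k t := by
    rw [intervalIntegral.integral_of_le hπ]
    simp_rw [hexp]
    exact (MeasureTheory.integral_tsum_of_summable_integral_norm hint hsum).symm
  rw [step]
  refine tsum_congr fun k => ?_
  rw [← intervalIntegral.integral_of_le hπ]
  have hFt : ∀ t : ℝ, F k t = (Complex.I * r) ^ k / (Nat.factorial k) *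
      ((Real.cos (2*t) * Real.cos t ^ k : ℝ) : ℂ) := by
    intro t; rw [hF]; push_cast; ring
  simp_rw [hFt]
  rw [intervalIntegral.integral_const_mul, intervalIntegral.integral_ofReal, T_eq]

lemma term_eq (r : ℝ) (m : ℕ) :
    (Complex.I * r) ^ (2*m+2) / (Nat.factorial (2*m+2)) *
      ((2 * C (2*m+2+2) - C (2*m+2) : ℝ) : ℂ) =
    ((-(2*π) * (((-1:ℝ)) ^ m / (Nat.factorial m * Nat.factorial (m + 2)) *
      (r / 2) ^ (2 * m + 2)) : ℝ) : ℂ) := by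
  have hI : (Complex.I * r) ^ (2*m+2) = (((-1:ℝ)) ^ (m+1) * r ^ (2*m+2) : ℝ) := by
    rw [show 2*m+2 = 2*(m+1) by ring, pow_mul]
    rw [mul_pow, Complex.I_sq]
    push_cast
    rw [mul_pow, ← pow_mul]
  rw [hI]
  rw [show 2*m+2+2 = 2*(m+2) by ring, show 2*m+2 = 2*(m+1) by ring]
  rw [C_even, C_even]
  rw [← Complex.ofReal_natCast, ← Complex.ofReal_div, ← Complex.ofReal_mul]
  congr 1
  have hhalf : ((r/2) ^ (2*(m+1)) : ℝ) = r ^ (2*(m+1)) / 4 ^ (m+1) := by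
    rw [div_pow]
    congr 1
    rw [pow_mul]
    norm_num
  rw [hhalf]
  have e1 : (Nat.factorial (2*(m+2)) : ℝ) =
      (2*m+4) * (2*m+3) * Nat.factorial (2*(m+1)) := by
    rw [show 2*(m+2) = (2*(m+1)+1)+1 by ring, Nat.factorial_succ, Nat.factorial_succ]
    push_cast; ring
  have e2 : (Nat.factorial (m+2) : ℝ) = (m+2) * (m+1) * Nat.factorial m := by
    rw [Nat.factorial_succ, Nat.factorial_succ]; push_cast; ring
  have e3 : (Nat.factorial (m+1) : ℝ) = (m+1) * Nat.factorial m := by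
    rw [Nat.factorial_succ]; push_cast; ring
  rw [e1, e2, e3]
  have h1 : (Nat.factorial (2*(m+1)) : ℝ) > 0 := by positivity
  have h2 : (Nat.factorial m : ℝ) > 0 := by positivity
  have h3 : ((4:ℝ)) ^ (m+1) > 0 := by positivity
  have h4 : ((4:ℝ)) ^ (m+2) = 4 * 4 ^ (m+1) := by rw [pow_succ]; ring
  rw [h4]
  have h5 : ((-1:ℝ)) ^ (m+1) = -(-1:ℝ)^m := by rw [pow_succ]; ring
  rw [h5]
  field_simp
  ring

lemma g_zero (r : ℝ) (k : ℕ) (hk : ∀ m : ℕ, k ≠ 2*m+2) :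
    (Complex.I * r) ^ k / (Nat.factorial k) * ((2 * C (k+2) - C k : ℝ) : ℂ) = 0 := by
  have hb : (2 * C (k+2) - C k : ℝ) = 0 := by
    rcases Nat.even_or_odd k with ⟨j, hj⟩ | ⟨j, hj⟩
    · rcases Nat.eq_zero_or_pos j with rfl | hj'
      · subst hj
        norm_num
        rw [show (2:ℕ) = 0 + 2 from rfl, C_rec, C_zero]
        norm_num
        ring
      · exfalso
        exact hk (j - 1) (by omega)
    · have h1 : k = 2*j+1 := by omega
      have h2 : k + 2 = 2*(j+1)+1 := by omega
      subst hj
      rw [show 2*j+1+2 = 2*(j+1)+1 by ring, C_odd, C_odd]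
      ring
  rw [hb]
  simp

lemma key (r : ℝ) (hr : 0 ≤ r) :
    (∫ t in (-π)..π, ((Real.cos (2*t) : ℝ) : ℂ) *
        Complex.exp (Complex.I * r * ((Real.cos t : ℝ) : ℂ))) =
      ((-(2*π) * besselJ 2 r : ℝ) : ℂ) := by
  rw [key_swap r hr]
  have hinj : Function.Injective (fun m : ℕ => 2*m+2) := by intro a b h; simp only [] at h; omega
  rw [← Function.Injective.tsum_eq hinj
    (f := fun k => (Complex.I * r) ^ k / (Nat.factorial k) * ((2 * C (k+2) - C k : ℝ) : ℂ))
    (by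
      intro k hk
      by_contra hc
      exact hk (g_zero r k (fun m hm => hc ⟨m, hm.symm⟩)))]
  calc (∑' m : ℕ, (Complex.I * r) ^ (2*m+2) / (Nat.factorial (2*m+2)) *
          ((2 * C (2*m+2+2) - C (2*m+2) : ℝ) : ℂ))
      = ∑' m : ℕ, ((-(2*π) * (((-1:ℝ)) ^ m / (Nat.factorial m * Nat.factorial (m + 2)) *
          (r / 2) ^ (2 * m + 2)) : ℝ) : ℂ) := tsum_congr fun m => term_eq r m
    _ = ((-(2*π) * besselJ 2 r : ℝ) : ℂ) := by
        rw [← Complex.ofReal_tsum, tsum_mul_left]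
        rfl

lemma odd_zero (r : ℝ) :
    (∫ s in (-π)..π, ((Real.sin (2*s) : ℝ) : ℂ) *
        Complex.exp (Complex.I * r * ((Real.cos s : ℝ) : ℂ))) = 0 := by
  set G : ℝ → ℂ := fun s => ((Real.sin (2*s) : ℝ) : ℂ) *
      Complex.exp (Complex.I * r * ((Real.cos s : ℝ) : ℂ)) with hG
  have h1 : (∫ x in (-π)..π, G (-x)) = ∫ x in -π..π, G x := by
    rw [intervalIntegral.integral_comp_neg]
    rw [neg_neg]
  have h2 : ∀ x : ℝ, G (-x) = - G x := by
    intro x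
    rw [hG]
    simp only []
    rw [show 2 * -x = -(2*x) by ring, Real.sin_neg, Real.cos_neg]
    push_cast
    ring
  simp_rw [h2] at h1
  rw [intervalIntegral.integral_neg] at h1
  have h3 : (∫ x in (-π)..π, G x) + (∫ x in (-π)..π, G x) = 0 := by
    nth_rewrite 1 [← h1]; ring
  have h4 := add_self_eq_zero.mp h3
  exact h4

/-- For every `r ≥ 0` and every unit vector `(u₁, u₂) ∈ ℝ²`,
`∫_{-π}^{π} cos t · sin t · exp(i r (u₁ cos t + u₂ sin t)) dt = −2π u₁ u₂ J₂(r)`. -/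
theorem circle_integral_cos_sin_exp (r : ℝ) (hr : 0 ≤ r) (u₁ u₂ : ℝ)
    (hu : u₁ ^ 2 + u₂ ^ 2 = 1) :
    ∫ t in (-Real.pi)..Real.pi,
        ((Real.cos t * Real.sin t : ℝ) : ℂ) *
          Complex.exp (Complex.I * (r : ℂ) *
            ((u₁ * Real.cos t + u₂ * Real.sin t : ℝ) : ℂ)) =
      ((-(2 * Real.pi) * u₁ * u₂ * besselJ 2 r : ℝ) : ℂ) := by
  -- find the phase φ
  set z : ℂ := ⟨u₁, u₂⟩ with hz
  have habs : ‖z‖ = 1 := by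
    have : ‖z‖ ^ 2 = 1 := by
      rw [Complex.sq_norm, Complex.normSq_mk]
      simpa [sq] using hu
    nlinarith [norm_nonneg z]
  have hz0 : z ≠ 0 := by
    intro h; rw [h] at habs; simp at habs
  set φ : ℝ := Complex.arg z with hφ
  have hcos : Real.cos φ = u₁ := by rw [hφ, Complex.cos_arg hz0, habs]; simp [hz]
  have hsin : Real.sin φ = u₂ := by rw [hφ, Complex.sin_arg, habs]; simp [hz]
  set h : ℝ → ℂ := fun s => ((Real.cos (s+φ) * Real.sin (s+φ) : ℝ) : ℂ) *
      Complex.exp (Complex.I * r * ((Real.cos s : ℝ) : ℂ)) with hh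
  have step1 : ∫ t in (-π)..π,
      ((Real.cos t * Real.sin t : ℝ) : ℂ) *
        Complex.exp (Complex.I * (r : ℂ) *
          ((u₁ * Real.cos t + u₂ * Real.sin t : ℝ) : ℂ)) = ∫ t in (-π)..π, h (t - φ) := by
    apply intervalIntegral.integral_congr
    intro t _
    rw [hh]
    simp only []
    rw [sub_add_cancel]
    congr 2
    rw [← hcos, ← hsin, Real.cos_sub]
    ring
  have hper : Function.Periodic h (2*π) := by
    intro s
    rw [hh]
    simp only []
    rw [show s + 2*π + φ = (s + φ) + 2*π by ring, Real.cos_add_two_pi, Real.sin_add_two_pi,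
      Real.cos_add_two_pi]
  have step2 : (∫ t in (-π)..π, h (t - φ)) = ∫ s in (-π)..π, h s := by
    rw [intervalIntegral.integral_comp_sub_right]
    have := hper.intervalIntegral_add_eq (-π - φ) (-π)
    rw [show -π - φ + 2*π = π - φ by ring, show -π + 2*π = π by ring] at this
    exact this
  rw [step1, step2]
  -- split h
  have hsplit : ∀ s : ℝ, h s =
      ((Real.cos (2*φ)/2 : ℝ) : ℂ) * (((Real.sin (2*s) : ℝ) : ℂ) *
        Complex.exp (Complex.I * r * ((Real.cos s : ℝ) : ℂ))) +
      ((Real.sin (2*φ)/2 : ℝ) : ℂ) * (((Real.cos (2*s) : ℝ) : ℂ) *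
        Complex.exp (Complex.I * r * ((Real.cos s : ℝ) : ℂ))) := by
    intro s
    rw [hh]
    simp only []
    have key2 : Real.cos (s+φ) * Real.sin (s+φ) =
        Real.cos (2*φ)/2 * Real.sin (2*s) + Real.sin (2*φ)/2 * Real.cos (2*s) := by
      have h1 := Real.sin_two_mul (s+φ)
      have h2 : Real.sin (2*(s+φ)) =
          Real.sin (2*s) * Real.cos (2*φ) + Real.cos (2*s) * Real.sin (2*φ) := by
        rw [show 2*(s+φ) = 2*s + 2*φ by ring, Real.sin_add]
      linarith
    rw [key2]
    push_cast
    ring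
  simp_rw [hsplit]
  have hcont1 : Continuous fun s : ℝ => (((Real.sin (2*s) : ℝ) : ℂ) *
      Complex.exp (Complex.I * r * ((Real.cos s : ℝ) : ℂ))) := by
    fun_prop
  have hcont2 : Continuous fun s : ℝ => (((Real.cos (2*s) : ℝ) : ℂ) *
      Complex.exp (Complex.I * r * ((Real.cos s : ℝ) : ℂ))) := by
    fun_prop
  rw [intervalIntegral.integral_add
    ((hcont1.intervalIntegrable _ _).const_mul _)
    ((hcont2.intervalIntegrable _ _).const_mul _),
    intervalIntegral.integral_const_mul, intervalIntegral.integral_const_mul,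
    odd_zero, key r hr]
  rw [mul_zero, zero_add, ← Complex.ofReal_mul]
  congr 1
  rw [Real.sin_two_mul, hsin, hcos]
  ring
end

section
/- For every a ∈ {0,1,2} and every b ∈ {1,2,3,4} there exists a constant C = C(a,b) > 0 such that for all R ≥ 1: if b ∈ {1,2,3} then ∫_{{u ∈ ℝ² : ‖u‖ ≤ R}} |J_a(2π‖u‖)|^b du ≤ C · R^{2 − b/2}, while if b = 4 then ∫_{{u ∈ ℝ² : ‖u‖ ≤ R}} |J_a(2π‖u‖)|^4 du ≤ C · (1 + log R). -/
open Real MeasureTheory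

namespace BesselAux

noncomputable def bCo (n m : ℕ) : ℝ :=
  (-1 : ℝ) ^ m / (Nat.factorial m * Nat.factorial (m + n))

noncomputable def bg (n m : ℕ) (t : ℝ) : ℝ := bCo n m * (t / 2) ^ (2 * m + n)

noncomputable def bg1 (n m : ℕ) (t : ℝ) : ℝ :=
  bCo n m * (2 * m + n : ℕ) / 2 * (t / 2) ^ (2 * m + n - 1)

noncomputable def bg2 (n m : ℕ) (t : ℝ) : ℝ :=
  bCo n m * (2 * m + n : ℕ) * ((2 * m + n - 1 : ℕ)) / 4 * (t / 2) ^ (2 * m + n - 1 - 1)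

lemma besselJ_eq (n : ℕ) (t : ℝ) : besselJ n t = ∑' m, bg n m t := rfl

lemma abs_bCo_le (n m : ℕ) : |bCo n m| ≤ 1 / Nat.factorial m := by
  have h1 : (1 : ℝ) ≤ Nat.factorial (m + n) := by exact_mod_cast (m + n).factorial_pos
  have h2 : (0 : ℝ) < Nat.factorial m := by exact_mod_cast m.factorial_pos
  rw [bCo, abs_div, abs_pow, abs_neg, abs_one, one_pow,
    abs_of_nonneg (by positivity : (0:ℝ) ≤ (Nat.factorial m * Nat.factorial (m + n) : ℝ))]
  apply one_div_le_one_div_of_le h2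
  nlinarith

lemma summable_of_factorial_bound {f : ℕ → ℝ} (A B : ℝ)
    (h : ∀ m, |f m| ≤ A * (B ^ m / Nat.factorial m)) : Summable f := by
  have hs : Summable (fun m : ℕ => A * (B ^ m / Nat.factorial m)) :=
    (Real.summable_pow_div_factorial B).mul_left A
  exact Summable.of_abs (hs.of_nonneg_of_le (fun m => abs_nonneg _) h)

lemma cast_le_two_pow (m : ℕ) : ((m : ℝ) + 1) ≤ 2 ^ m := by
  exact_mod_cast Nat.lt_two_pow_self (n := m)

lemma pow_aux {x S : ℝ} (hS : 1 ≤ S) (hx : |x| ≤ S) {j m : ℕ} (hj : j ≤ 2 * m + 2) :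
    |x| ^ j ≤ S ^ 2 * (S ^ 2) ^ m := by
  calc |x| ^ j ≤ S ^ j := pow_le_pow_left₀ (abs_nonneg x) hx j
    _ ≤ S ^ (2 * m + 2) := pow_le_pow_right₀ (by linarith) hj
    _ = S ^ 2 * (S ^ 2) ^ m := by rw [← pow_mul]; ring

lemma fact_pos (m : ℕ) : (0:ℝ) < Nat.factorial m := by exact_mod_cast m.factorial_pos

lemma abs_bg_le (n m : ℕ) (hn : n ≤ 2) {t S : ℝ} (hS : 1 ≤ S) (ht : |t / 2| ≤ S) :
    |bg n m t| ≤ S ^ 2 * ((S ^ 2) ^ m / Nat.factorial m) := by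
  have h1 := abs_bCo_le n m
  have h2 : |t / 2| ^ (2 * m + n) ≤ S ^ 2 * (S ^ 2) ^ m := pow_aux hS ht (by omega)
  have h3 := fact_pos m
  calc |bg n m t| = |bCo n m| * |t / 2| ^ (2 * m + n) := by
        rw [bg, abs_mul, abs_pow]
    _ ≤ (1 / Nat.factorial m) * (S ^ 2 * (S ^ 2) ^ m) := by
        apply mul_le_mul h1 h2 (by positivity) (by positivity)
    _ = S ^ 2 * ((S ^ 2) ^ m / Nat.factorial m) := by ring

lemma abs_bg1_le (n m : ℕ) (hn : n ≤ 2) {t S : ℝ} (hS : 1 ≤ S) (ht : |t / 2| ≤ S) :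
    |bg1 n m t| ≤ S ^ 2 * ((2 * S ^ 2) ^ m / Nat.factorial m) := by
  have h1 := abs_bCo_le n m
  have h2 : |t / 2| ^ (2 * m + n - 1) ≤ S ^ 2 * (S ^ 2) ^ m := pow_aux hS ht (by omega)
  have h3 := fact_pos m
  have hk : ((2 * m + n : ℕ) : ℝ) / 2 ≤ 2 ^ m := by
    have := cast_le_two_pow m
    push_cast
    have : (n : ℝ) ≤ 2 := by exact_mod_cast hn
    nlinarith [cast_le_two_pow m]
  calc |bg1 n m t| = |bCo n m| * (((2 * m + n : ℕ) : ℝ) / 2) * |t / 2| ^ (2 * m + n - 1) := by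
        simp only [bg1, abs_mul, abs_div, abs_pow, Nat.abs_cast, abs_two]
        ring
    _ ≤ (1 / Nat.factorial m) * (2 ^ m) * (S ^ 2 * (S ^ 2) ^ m) := by
        apply mul_le_mul (mul_le_mul h1 hk (by positivity) (by positivity)) h2 (by positivity)
        positivity
    _ = S ^ 2 * ((2 * S ^ 2) ^ m / Nat.factorial m) := by rw [mul_pow]; ring

lemma abs_bg2_le (n m : ℕ) (hn : n ≤ 2) {t S : ℝ} (hS : 1 ≤ S) (ht : |t / 2| ≤ S) :
    |bg2 n m t| ≤ S ^ 2 * ((4 * S ^ 2) ^ m / Nat.factorial m) := by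
  have h1 := abs_bCo_le n m
  have h2 : |t / 2| ^ (2 * m + n - 1 - 1) ≤ S ^ 2 * (S ^ 2) ^ m := pow_aux hS ht (by omega)
  have h3 := fact_pos m
  have hk : ((2 * m + n : ℕ) : ℝ) * ((2 * m + n - 1 : ℕ) : ℝ) / 4 ≤ 4 ^ m := by
    have e1 : ((2 * m + n : ℕ) : ℝ) ≤ 2 * (m + 1) := by
      have : (2 * m + n : ℕ) ≤ 2 * (m + 1) := by omega
      exact_mod_cast this
    have e2 : ((2 * m + n - 1 : ℕ) : ℝ) ≤ 2 * (m + 1) := by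
      have : (2 * m + n - 1 : ℕ) ≤ 2 * (m + 1) := by omega
      exact_mod_cast this
    have e3 : ((m : ℝ) + 1) ^ 2 ≤ 4 ^ m := by
      calc ((m : ℝ) + 1) ^ 2 ≤ (2 ^ m) ^ 2 :=
            pow_le_pow_left₀ (by positivity) (cast_le_two_pow m) 2
        _ = 4 ^ m := by rw [← pow_mul, mul_comm, pow_mul]; norm_num
    have h0 : (0:ℝ) ≤ ((2 * m + n : ℕ) : ℝ) := by positivity
    have h0' : (0:ℝ) ≤ ((2 * m + n - 1 : ℕ) : ℝ) := by positivity
    nlinarith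
  calc |bg2 n m t|
      = |bCo n m| * ((2 * m + n : ℕ) : ℝ) * ((2 * m + n - 1 : ℕ) : ℝ) / 4
          * |t / 2| ^ (2 * m + n - 1 - 1) := by
        simp only [bg2, abs_mul, abs_div, abs_pow, Nat.abs_cast]
        norm_num
    _ = |bCo n m| * (((2 * m + n : ℕ) : ℝ) * ((2 * m + n - 1 : ℕ) : ℝ) / 4)
          * |t / 2| ^ (2 * m + n - 1 - 1) := by ring
    _ ≤ (1 / Nat.factorial m) * (4 ^ m) * (S ^ 2 * (S ^ 2) ^ m) := by
        apply mul_le_mul (mul_le_mul h1 hk (by positivity) (by positivity)) h2 (by positivity)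
        positivity
    _ = S ^ 2 * ((4 * S ^ 2) ^ m / Nat.factorial m) := by rw [mul_pow]; ring

lemma summable_bg (n : ℕ) (hn : n ≤ 2) (t : ℝ) : Summable (fun m => bg n m t) := by
  set S := max (|t / 2|) 1 with hS
  exact summable_of_factorial_bound (S ^ 2) (S ^ 2)
    (fun m => abs_bg_le n m hn (le_max_right _ _) (le_max_left _ _))

lemma summable_bg1 (n : ℕ) (hn : n ≤ 2) (t : ℝ) : Summable (fun m => bg1 n m t) := by
  set S := max (|t / 2|) 1 with hS
  exact summable_of_factorial_bound (S ^ 2) (2 * S ^ 2)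
    (fun m => abs_bg1_le n m hn (le_max_right _ _) (le_max_left _ _))

lemma summable_bg2 (n : ℕ) (hn : n ≤ 2) (t : ℝ) : Summable (fun m => bg2 n m t) := by
  set S := max (|t / 2|) 1 with hS
  exact summable_of_factorial_bound (S ^ 2) (4 * S ^ 2)
    (fun m => abs_bg2_le n m hn (le_max_right _ _) (le_max_left _ _))


lemma hasDerivAt_bg (n m : ℕ) (t : ℝ) : HasDerivAt (fun y => bg n m y) (bg1 n m t) t := by
  have h : HasDerivAt (fun y : ℝ => (y / 2) ^ (2 * m + n))
      (((2 * m + n : ℕ) : ℝ) * (t / 2) ^ (2 * m + n - 1) * (1 / 2)) t :=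
    ((hasDerivAt_id t).div_const 2).pow (2 * m + n)
  have h2 := h.const_mul (bCo n m)
  refine h2.congr_deriv ?_
  rw [bg1]; ring

lemma hasDerivAt_bg1 (n m : ℕ) (t : ℝ) : HasDerivAt (fun y => bg1 n m y) (bg2 n m t) t := by
  have h : HasDerivAt (fun y : ℝ => (y / 2) ^ (2 * m + n - 1))
      (((2 * m + n - 1 : ℕ) : ℝ) * (t / 2) ^ (2 * m + n - 1 - 1) * (1 / 2)) t :=
    ((hasDerivAt_id t).div_const 2).pow (2 * m + n - 1)
  have h2 := h.const_mul (bCo n m * (2 * m + n : ℕ) / 2)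
  refine h2.congr_deriv ?_
  rw [bg2]; ring

noncomputable def bJ1 (n : ℕ) (t : ℝ) : ℝ := ∑' m, bg1 n m t
noncomputable def bJ2 (n : ℕ) (t : ℝ) : ℝ := ∑' m, bg2 n m t

lemma mem_ball_bound {t y : ℝ} (hy : y ∈ Metric.ball (0:ℝ) (|t| + 1)) :
    |y / 2| ≤ max ((|t| + 1) / 2) 1 := by
  rw [Metric.mem_ball, Real.dist_eq, sub_zero] at hy
  rw [abs_div]
  refine le_max_of_le_left ?_
  rw [abs_two]
  linarith

lemma hasDerivAt_besselJ (n : ℕ) (hn : n ≤ 2) (t : ℝ) :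
    HasDerivAt (besselJ n) (bJ1 n t) t := by
  set S := max ((|t| + 1) / 2) 1 with hSdef
  have hS : 1 ≤ S := le_max_right _ _
  have ht : t ∈ Metric.ball (0:ℝ) (|t| + 1) := by
    rw [Metric.mem_ball, Real.dist_eq, sub_zero]; linarith
  exact hasDerivAt_tsum_of_isPreconnected
    ((Real.summable_pow_div_factorial (2 * S ^ 2)).mul_left (S ^ 2))
    Metric.isOpen_ball (convex_ball (0:ℝ) (|t| + 1)).isPreconnected
    (fun m y _ => hasDerivAt_bg n m y)
    (fun m y hy => by
      rw [Real.norm_eq_abs]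
      exact abs_bg1_le n m hn hS (mem_ball_bound hy))
    ht (summable_bg n hn t) ht

lemma hasDerivAt_bJ1 (n : ℕ) (hn : n ≤ 2) (t : ℝ) :
    HasDerivAt (bJ1 n) (bJ2 n t) t := by
  set S := max ((|t| + 1) / 2) 1 with hSdef
  have hS : 1 ≤ S := le_max_right _ _
  have ht : t ∈ Metric.ball (0:ℝ) (|t| + 1) := by
    rw [Metric.mem_ball, Real.dist_eq, sub_zero]; linarith
  exact hasDerivAt_tsum_of_isPreconnected
    ((Real.summable_pow_div_factorial (4 * S ^ 2)).mul_left (S ^ 2))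
    Metric.isOpen_ball (convex_ball (0:ℝ) (|t| + 1)).isPreconnected
    (fun m y _ => hasDerivAt_bg1 n m y)
    (fun m y hy => by
      rw [Real.norm_eq_abs]
      exact abs_bg2_le n m hn hS (mem_ball_bound hy))
    ht (summable_bg1 n hn t) ht


lemma H1 (j : ℕ) (x : ℝ) : (j : ℝ) * x ^ (j - 1) * x = (j : ℝ) * x ^ j := by
  cases j with
  | zero => simp
  | succ j => push_cast; rw [pow_succ]; ring

lemma H2 (j : ℕ) (x : ℝ) :
    (j : ℝ) * ((j - 1 : ℕ) : ℝ) * x ^ (j - 1 - 1) * x ^ 2 = (j : ℝ) * ((j - 1 : ℕ) : ℝ) * x ^ j := by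
  match j with
  | 0 => simp
  | 1 => simp
  | (j+2) =>
    have e : j + 2 - 1 - 1 = j := rfl
    rw [e, show j + 2 = j + 2 from rfl, pow_add]
    ring

lemma H3 (j : ℕ) : (j : ℝ) * ((j - 1 : ℕ) : ℝ) = (j : ℝ) * ((j : ℝ) - 1) := by
  cases j with
  | zero => simp
  | succ j => push_cast [Nat.add_sub_cancel]; ring

lemma bCo_succ (n m : ℕ) :
    bCo n (m + 1) * ((m : ℝ) + 1) * ((m : ℝ) + 1 + n) = - bCo n m := by
  rw [bCo, bCo]
  have e1 : m + 1 + n = (m + n) + 1 := by omega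
  rw [Nat.factorial_succ, e1, Nat.factorial_succ]
  have f1 : ((m.factorial : ℝ)) ≠ 0 := by exact_mod_cast m.factorial_pos.ne'
  have f2 : (((m + n).factorial : ℝ)) ≠ 0 := by exact_mod_cast (m + n).factorial_pos.ne'
  have f3 : ((m : ℝ) + 1) ≠ 0 := by positivity
  have f4 : ((m : ℝ) + 1 + n) ≠ 0 := by positivity
  push_cast
  field_simp
  ring

lemma pointwise_ode (n m : ℕ) (x : ℝ) :
    (2 * x) ^ 2 * bg2 n m (2 * x) + (2 * x) * bg1 n m (2 * x)
      + ((2 * x) ^ 2 - (n : ℝ) ^ 2) * bg n m (2 * x)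
    = (4 * bCo n m * m * ((m : ℝ) + n) * x ^ (2 * m + n))
      - (4 * bCo n (m + 1) * ((m : ℝ) + 1) * ((m : ℝ) + 1 + n) * x ^ (2 * (m + 1) + n)) := by
  have hx : (2 * x) / 2 = x := by ring
  rw [bg, bg1, bg2, hx]
  have h1 := H1 (2 * m + n) x
  have h2 := H2 (2 * m + n) x
  have h3 := bCo_succ n m
  have e : 2 * (m + 1) + n = (2 * m + n) + 2 := by omega
  rw [e, pow_add]
  have h4 := H3 (2 * m + n)
  push_cast at h1 h2 h4 ⊢
  linear_combination (bCo n m) * h2 + (bCo n m) * h1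
    + (bCo n m * x ^ (2 * m + n)) * h4 + (4 * x ^ (2 * m + n) * x ^ 2) * h3

lemma bessel_ode (n : ℕ) (hn : n ≤ 2) (t : ℝ) :
    t ^ 2 * bJ2 n t + t * bJ1 n t + (t ^ 2 - (n : ℝ) ^ 2) * besselJ n t = 0 := by
  obtain ⟨x, rfl⟩ : ∃ x, t = 2 * x := ⟨t / 2, by ring⟩
  set q : ℕ → ℝ := fun m => 4 * bCo n m * (m : ℝ) * ((m : ℝ) + n) * x ^ (2 * m + n) with hqdef
  have hS : (1:ℝ) ≤ max |x| 1 := le_max_right _ _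
  set S := max |x| 1 with hSdef
  have hq : Summable q := by
    apply summable_of_factorial_bound (8 * S ^ 2) (4 * S ^ 2)
    intro m
    have h1 := abs_bCo_le n m
    have h2 : |x| ^ (2 * m + n) ≤ S ^ 2 * (S ^ 2) ^ m :=
      pow_aux hS (le_max_left _ _) (by omega)
    have h3 := fact_pos m
    have hm : (m : ℝ) ≤ 2 ^ m := by
      have := cast_le_two_pow m; linarith
    have hmn : ((m : ℝ) + n) ≤ 2 * 2 ^ m := by
      have := cast_le_two_pow m
      have : (n : ℝ) ≤ 2 := by exact_mod_cast hn
      nlinarith [cast_le_two_pow m]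
    have hb : |q m| = 4 * |bCo n m| * (m : ℝ) * ((m : ℝ) + n) * |x| ^ (2 * m + n) := by
      rw [hqdef]
      simp only [abs_mul, abs_pow, Nat.abs_cast]
      rw [abs_of_nonneg (by norm_num : (0:ℝ) ≤ (4:ℝ)),
        abs_of_nonneg (by positivity : (0:ℝ) ≤ (m : ℝ) + n)]
    rw [hb]
    have hc : 4 * |bCo n m| * (m : ℝ) * ((m : ℝ) + n) * |x| ^ (2 * m + n)
        ≤ 4 * (1 / Nat.factorial m) * (2 ^ m) * (2 * 2 ^ m) * (S ^ 2 * (S ^ 2) ^ m) := by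
      have hmpos : (0:ℝ) ≤ (m:ℝ) := by positivity
      have h2' : (0:ℝ) ≤ |x| ^ (2*m+n) := by positivity
      have : 4 * |bCo n m| * (m : ℝ) * ((m : ℝ) + n) ≤ 4 * (1 / Nat.factorial m) * 2 ^ m * (2 * 2 ^ m) := by
        apply mul_le_mul _ hmn (by positivity) (by positivity)
        apply mul_le_mul _ hm hmpos (by positivity)
        apply mul_le_mul_of_nonneg_left h1 (by norm_num)
      calc 4 * |bCo n m| * (m : ℝ) * ((m : ℝ) + n) * |x| ^ (2 * m + n)
          ≤ (4 * (1 / Nat.factorial m) * 2 ^ m * (2 * 2 ^ m)) * (S ^ 2 * (S ^ 2) ^ m) :=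
            mul_le_mul this h2 h2' (by positivity)
        _ = 4 * (1 / Nat.factorial m) * (2 ^ m) * (2 * 2 ^ m) * (S ^ 2 * (S ^ 2) ^ m) := by ring
    refine hc.trans (le_of_eq ?_)
    have h4m : (2:ℝ) ^ m * 2 ^ m = 4 ^ m := by
      rw [← pow_add, show m + m = 2 * m by ring, pow_mul]; norm_num
    rw [mul_pow, ← h4m]
    field_simp
    ring
  have hq1 : Summable (fun m => q (m + 1)) := (summable_nat_add_iff 1).2 hq
  have key : ∀ m : ℕ,
      (2 * x) ^ 2 * bg2 n m (2 * x) + (2 * x) * bg1 n m (2 * x)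
        + ((2 * x) ^ 2 - (n : ℝ) ^ 2) * bg n m (2 * x) = q m - q (m + 1) := by
    intro m
    rw [hqdef]
    have := pointwise_ode n m x
    push_cast
    push_cast at this
    linarith [this]
  have s2 : Summable (fun m => (2 * x) ^ 2 * bg2 n m (2 * x)) :=
    (summable_bg2 n hn _).mul_left _
  have s1 : Summable (fun m => (2 * x) * bg1 n m (2 * x)) :=
    (summable_bg1 n hn _).mul_left _
  have s0 : Summable (fun m => ((2 * x) ^ 2 - (n : ℝ) ^ 2) * bg n m (2 * x)) :=
    (summable_bg n hn _).mul_left _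
  calc (2*x) ^ 2 * bJ2 n (2*x) + (2*x) * bJ1 n (2*x) + ((2*x) ^ 2 - (n : ℝ) ^ 2) * besselJ n (2*x)
      = (∑' m, (2*x) ^ 2 * bg2 n m (2*x)) + (∑' m, (2*x) * bg1 n m (2*x))
        + (∑' m, ((2*x) ^ 2 - (n : ℝ) ^ 2) * bg n m (2*x)) := by
        rw [bJ1, bJ2, besselJ_eq, tsum_mul_left, tsum_mul_left, tsum_mul_left]
    _ = ∑' m, ((2*x) ^ 2 * bg2 n m (2*x) + (2*x) * bg1 n m (2*x)
        + ((2*x) ^ 2 - (n : ℝ) ^ 2) * bg n m (2*x)) := by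
        rw [(s2.add s1).tsum_add s0, s2.tsum_add s1]
    _ = ∑' m, (q m - q (m + 1)) := tsum_congr key
    _ = (∑' m, q m) - (∑' m, q (m + 1)) := hq.tsum_sub hq1
    _ = q 0 := by rw [hq.tsum_eq_zero_add]; ring
    _ = 0 := by rw [hqdef]; simp


noncomputable def yf (n : ℕ) (t : ℝ) : ℝ := Real.sqrt t * besselJ n t
noncomputable def zf (n : ℕ) (t : ℝ) : ℝ :=
  besselJ n t / (2 * Real.sqrt t) + Real.sqrt t * bJ1 n t
noncomputable def Gf (n : ℕ) (t : ℝ) : ℝ :=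
  ((zf n t) ^ 2 + (yf n t) ^ 2) * Real.exp (4 / t)

lemma hasDerivAt_yf (n : ℕ) (hn : n ≤ 2) {t : ℝ} (ht : 0 < t) :
    HasDerivAt (yf n) (zf n t) t := by
  have h := (Real.hasDerivAt_sqrt ht.ne').mul (hasDerivAt_besselJ n hn t)
  refine h.congr_deriv ?_
  rw [zf]; ring

lemma hasDerivAt_zf (n : ℕ) (hn : n ≤ 2) {t : ℝ} (ht : 0 < t) :
    HasDerivAt (zf n) (-(1 + (1/4 - (n:ℝ)^2)/t^2) * yf n t) t := by
  have hs : Real.sqrt t ≠ 0 := by positivity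
  have hs2 : (2 : ℝ) * Real.sqrt t ≠ 0 := by positivity
  have h1 := (hasDerivAt_besselJ n hn t).div
    ((Real.hasDerivAt_sqrt ht.ne').const_mul 2) hs2
  have h2 := (Real.hasDerivAt_sqrt ht.ne').mul (hasDerivAt_bJ1 n hn t)
  have h := h1.add h2
  refine h.congr_deriv ?_
  symm
  have ode := bessel_ode n hn t
  rw [yf]
  set s := Real.sqrt t with hsdef
  set J := besselJ n t with hJdef
  set J1 := bJ1 n t with hJ1def
  set J2 := bJ2 n t with hJ2def
  have hsq : s ^ 2 = t := Real.sq_sqrt ht.le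
  rw [← hsq] at ode ⊢
  have hs0 : s ≠ 0 := hs
  field_simp
  linear_combination (-16) * ode
lemma hasDerivAt_Gf (n : ℕ) (hn : n ≤ 2) {t : ℝ} (ht : 0 < t) :
    HasDerivAt (Gf n)
      (((2 * zf n t * (-(1 + (1/4 - (n:ℝ)^2)/t^2) * yf n t)) + 2 * yf n t * zf n t) * Real.exp (4 / t)
        + ((zf n t) ^ 2 + (yf n t) ^ 2) * (Real.exp (4 / t) * (4 * -(t ^ 2)⁻¹))) t := by
  have hy := hasDerivAt_yf n hn ht
  have hz := hasDerivAt_zf n hn ht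
  have hF : HasDerivAt (fun x => (zf n x) ^ 2 + (yf n x) ^ 2)
      (2 * zf n t * (-(1 + (1/4 - (n:ℝ)^2)/t^2) * yf n t) + 2 * yf n t * zf n t) t := by
    have h1 := hz.pow 2
    have h2 := hy.pow 2
    have := h1.add h2
    refine this.congr_deriv ?_
    push_cast
    ring
  have hinv : HasDerivAt (fun x : ℝ => 4 / x) (4 * -(t ^ 2)⁻¹) t := by
    simpa [div_eq_mul_inv] using (hasDerivAt_inv ht.ne').const_mul (4:ℝ)
  have hE : HasDerivAt (fun x : ℝ => Real.exp (4 / x)) (Real.exp (4 / t) * (4 * -(t ^ 2)⁻¹)) t :=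
    hinv.exp
  exact hF.mul hE

lemma Gf_antitone (n : ℕ) (hn : n ≤ 2) : AntitoneOn (Gf n) (Set.Ici 1) := by
  have hpos : ∀ x ∈ Set.Ici (1:ℝ), (0:ℝ) < x := fun x hx => lt_of_lt_of_le one_pos hx
  apply antitoneOn_of_deriv_nonpos (convex_Ici 1)
  · exact fun x hx => ((hasDerivAt_Gf n hn (hpos x hx)).continuousAt).continuousWithinAt
  · intro x hx
    rw [interior_Ici] at hx
    exact ((hasDerivAt_Gf n hn (lt_trans one_pos hx)).differentiableAt).differentiableWithinAt
  · intro x hx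
    rw [interior_Ici] at hx
    have hx0 : (0:ℝ) < x := lt_trans one_pos hx
    rw [(hasDerivAt_Gf n hn hx0).deriv]
    set y := yf n x
    set z := zf n x
    set c : ℝ := 1/4 - (n:ℝ)^2 with hcdef
    have hc1 : c ≤ 4 := by
      have : (0:ℝ) ≤ (n:ℝ)^2 := by positivity
      rw [hcdef]; linarith
    have hc2 : -4 ≤ c := by
      have hnn : (n:ℝ) ≤ 2 := by exact_mod_cast hn
      have : (n:ℝ)^2 ≤ 4 := by nlinarith [Nat.cast_nonneg (α := ℝ) n]
      rw [hcdef]; linarith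
    have he : (0:ℝ) < Real.exp (4 / x) := Real.exp_pos _
    have hx2 : (0:ℝ) < x^2 := by positivity
    have key : (2 * z * (-(1 + c/x^2) * y) + 2 * y * z) - (4 / x^2) * (z^2 + y^2) ≤ 0 := by
      have e1 : (2 * z * (-(1 + c/x^2) * y) + 2 * y * z) - (4 / x^2) * (z^2 + y^2)
          = (x^2)⁻¹ * (-(2 * c * y * z) - 4 * (y^2 + z^2)) := by
        field_simp
        ring
      rw [e1]
      apply mul_nonpos_of_nonneg_of_nonpos (by positivity)
      nlinarith [mul_nonneg (by linarith : (0:ℝ) ≤ 4 + c) (sq_nonneg (y + z)),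
        mul_nonneg (by linarith : (0:ℝ) ≤ 4 - c) (sq_nonneg (y - z))]
    calc (2 * z * (-(1 + c/x^2) * y) + 2 * y * z) * Real.exp (4 / x)
          + (z ^ 2 + y ^ 2) * (Real.exp (4 / x) * (4 * -(x ^ 2)⁻¹))
        = Real.exp (4 / x) * ((2 * z * (-(1 + c/x^2) * y) + 2 * y * z) - (4 / x^2) * (z^2 + y^2)) := by
          field_simp
          ring
      _ ≤ 0 := mul_nonpos_of_nonneg_of_nonpos he.le key

lemma sq_decay (n : ℕ) (hn : n ≤ 2) {t : ℝ} (ht : 1 ≤ t) :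
    t * (besselJ n t) ^ 2 ≤ Gf n 1 := by
  have ht0 : (0:ℝ) < t := lt_of_lt_of_le one_pos ht
  have h1 : yf n t ^ 2 ≤ Gf n t := by
    rw [Gf]
    have he : (1:ℝ) ≤ Real.exp (4 / t) := by
      rw [← Real.exp_zero]
      apply Real.exp_le_exp.mpr
      positivity
    nlinarith [sq_nonneg (zf n t), sq_nonneg (yf n t)]
  have h2 : Gf n t ≤ Gf n 1 :=
    Gf_antitone n hn (Set.mem_Ici.mpr le_rfl) (Set.mem_Ici.mpr ht) ht
  have h3 : yf n t ^ 2 = t * (besselJ n t) ^ 2 := by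
    rw [yf, mul_pow, Real.sq_sqrt ht0.le]
  linarith

lemma abs_besselJ_le_small (n : ℕ) (hn : n ≤ 2) {t : ℝ} (ht : |t| ≤ 1) :
    |besselJ n t| ≤ ∑' m : ℕ, (1:ℝ) / Nat.factorial m := by
  have hsum := (summable_bg n hn t).abs
  have hsumE : Summable (fun m : ℕ => (1:ℝ) / Nat.factorial m) := by
    have := Real.summable_pow_div_factorial 1
    simpa using this
  have hpt : ∀ m, |bg n m t| ≤ (1:ℝ) / Nat.factorial m := by
    intro m
    have h1 := abs_bCo_le n m
    have h2 : |t / 2| ^ (2 * m + n) ≤ 1 := by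
      apply pow_le_one₀ (abs_nonneg _)
      rw [abs_div, abs_two]
      linarith
    have h3 := fact_pos m
    calc |bg n m t| = |bCo n m| * |t / 2| ^ (2 * m + n) := by
          rw [bg, abs_mul, abs_pow]
      _ ≤ (1 / Nat.factorial m) * 1 :=
          mul_le_mul h1 h2 (by positivity) (by positivity)
      _ = 1 / Nat.factorial m := by ring
  calc |besselJ n t| = |∑' m, bg n m t| := by rw [besselJ_eq]
    _ ≤ ∑' m, |bg n m t| := by
        have := norm_tsum_le_tsum_norm (f := fun m => bg n m t) (by simpa using hsum)
        simpa using this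
    _ ≤ ∑' m, (1:ℝ) / Nat.factorial m := Summable.tsum_le_tsum hpt hsum hsumE

lemma besselJ_decay (n : ℕ) (hn : n ≤ 2) :
    ∃ D : ℝ, 1 ≤ D ∧ ∀ t : ℝ, 0 ≤ t →
      |besselJ n t| ≤ D * (max t 1) ^ (-(1/2) : ℝ) := by
  set E0 : ℝ := ∑' m : ℕ, (1:ℝ) / Nat.factorial m with hE0
  have hE0nn : 0 ≤ E0 := tsum_nonneg (fun m => by positivity)
  set K : ℝ := max (Gf n 1) 1 with hK
  have hK1 : (1:ℝ) ≤ K := le_max_right _ _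
  have hKnn : (0:ℝ) ≤ K := by linarith
  refine ⟨Real.sqrt K + E0, ?_, ?_⟩
  · have : (1:ℝ) ≤ Real.sqrt K := by
      rw [show (1:ℝ) = Real.sqrt 1 by rw [Real.sqrt_one]]
      exact Real.sqrt_le_sqrt hK1
    linarith
  intro t ht0
  rcases le_or_gt t 1 with h | h
  · rw [max_eq_right h, Real.one_rpow, mul_one]
    have := abs_besselJ_le_small n hn (by rw [abs_of_nonneg ht0]; exact h)
    have h1 : (0:ℝ) ≤ Real.sqrt K := Real.sqrt_nonneg _
    linarith
  · have ht1 : (1:ℝ) ≤ t := h.le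
    have htpos : (0:ℝ) < t := lt_trans one_pos h
    rw [max_eq_left ht1]
    have hsq := sq_decay n hn ht1
    have hGK : Gf n 1 ≤ K := le_max_left _ _
    have h2 : (besselJ n t) ^ 2 ≤ K / t := by
      rw [le_div_iff₀ htpos]
      nlinarith
    have h3 : |besselJ n t| ≤ Real.sqrt (K / t) := by
      rw [← Real.sqrt_sq_eq_abs]
      exact Real.sqrt_le_sqrt h2
    have h4 : Real.sqrt (K / t) = Real.sqrt K / Real.sqrt t :=
      Real.sqrt_div' K htpos.le
    have h5 : t ^ (-(1/2) : ℝ) = (Real.sqrt t)⁻¹ := by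
      rw [Real.rpow_neg htpos.le, ← Real.sqrt_eq_rpow]
    rw [h5]
    have hst : (0:ℝ) < Real.sqrt t := Real.sqrt_pos.mpr htpos
    calc |besselJ n t| ≤ Real.sqrt K / Real.sqrt t := by rw [← h4]; exact h3
      _ ≤ (Real.sqrt K + E0) * (Real.sqrt t)⁻¹ := by
          rw [div_eq_mul_inv]
          apply mul_le_mul_of_nonneg_right (by linarith) (by positivity)

end BesselAux


noncomputable def Vol2 : ℝ := (volume (Metric.ball (0 : EuclideanSpace ℝ (Fin 2)) 1)).toReal

lemma polar_formula (f : ℝ → ℝ) :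
    ∫ u : EuclideanSpace ℝ (Fin 2), f ‖u‖
      = 2 * Vol2 * ∫ r in Set.Ioi (0:ℝ), r * f r := by
  have h := MeasureTheory.integral_fun_norm_addHaar
    (volume : Measure (EuclideanSpace ℝ (Fin 2))) f
  rw [h]
  simp only [finrank_euclideanSpace_fin, smul_eq_mul, pow_one, nsmul_eq_mul, Nat.cast_ofNat]
  rw [Vol2]
  rw [show (fun y : ℝ => y ^ 1 * f y) = fun y : ℝ => y * f y from funext fun y => by rw [pow_one]]
  rw [measureReal_def]
  ring

lemma rpow_max_cont (β : ℝ) : Continuous (fun r : ℝ => (max r 1) ^ (-β)) := by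
  apply Continuous.rpow_const (continuous_id.max continuous_const)
  intro x
  left
  exact ne_of_gt (lt_of_lt_of_le one_pos (le_max_right _ _))

lemma ball_int_eq (β : ℝ) {R : ℝ} (hR : 1 ≤ R) :
    ∫ u in Metric.closedBall (0 : EuclideanSpace ℝ (Fin 2)) R, (max ‖u‖ 1) ^ (-β)
      = 2 * Vol2 * ∫ r in (0:ℝ)..R, r * (max r 1) ^ (-β) := by
  have h0R : (0:ℝ) ≤ R := le_trans zero_le_one hR
  set fR : ℝ → ℝ := (Set.Icc (0:ℝ) R).indicator (fun r => (max r 1) ^ (-β)) with hfR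
  have key : ∀ u : EuclideanSpace ℝ (Fin 2),
      (Metric.closedBall (0 : EuclideanSpace ℝ (Fin 2)) R).indicator
        (fun u => (max ‖u‖ 1) ^ (-β)) u = fR ‖u‖ := by
    intro u
    by_cases hu : ‖u‖ ≤ R
    · rw [Set.indicator_of_mem (by simpa [mem_closedBall_zero_iff] using hu),
        hfR, Set.indicator_of_mem (Set.mem_Icc.mpr ⟨norm_nonneg u, hu⟩)]
    · rw [Set.indicator_of_notMem (by simpa [mem_closedBall_zero_iff] using hu),
        hfR, Set.indicator_of_notMem (by simp only [Set.mem_Icc, not_and]; intro _; exact hu)]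
  calc ∫ u in Metric.closedBall (0 : EuclideanSpace ℝ (Fin 2)) R, (max ‖u‖ 1) ^ (-β)
      = ∫ u : EuclideanSpace ℝ (Fin 2),
          (Metric.closedBall (0 : EuclideanSpace ℝ (Fin 2)) R).indicator
            (fun u => (max ‖u‖ 1) ^ (-β)) u := by
        rw [MeasureTheory.integral_indicator (measurableSet_closedBall)]
    _ = ∫ u : EuclideanSpace ℝ (Fin 2), fR ‖u‖ := by
        exact integral_congr_ae (Filter.Eventually.of_forall key)
    _ = 2 * Vol2 * ∫ r in Set.Ioi (0:ℝ), r * fR r := polar_formula fR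
    _ = 2 * Vol2 * ∫ r in (0:ℝ)..R, r * (max r 1) ^ (-β) := by
        congr 1
        have e1 : (fun r : ℝ => r * fR r)
            = (Set.Icc (0:ℝ) R).indicator (fun r => r * (max r 1) ^ (-β)) := by
          funext r
          by_cases hr : r ∈ Set.Icc (0:ℝ) R
          · rw [hfR, Set.indicator_of_mem hr, Set.indicator_of_mem hr]
          · rw [hfR, Set.indicator_of_notMem hr, Set.indicator_of_notMem hr, mul_zero]
        rw [e1, MeasureTheory.setIntegral_indicator measurableSet_Icc]
        rw [show Set.Ioi (0:ℝ) ∩ Set.Icc (0:ℝ) R = Set.Ioc (0:ℝ) R by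
          ext x
          simp only [Set.mem_inter_iff, Set.mem_Ioi, Set.mem_Icc, Set.mem_Ioc]
          constructor
          · rintro ⟨h1, _, h3⟩; exact ⟨h1, h3⟩
          · rintro ⟨h1, h2⟩; exact ⟨h1, le_of_lt h1, h2⟩]
        rw [intervalIntegral.integral_of_le h0R]

lemma interval_int_split (β : ℝ) {R : ℝ} (hR : 1 ≤ R) :
    ∫ r in (0:ℝ)..R, r * (max r 1) ^ (-β)
      = 1/2 + ∫ x in (1:ℝ)..R, x * (max x 1) ^ (-β) := by
  have hcont : Continuous (fun r : ℝ => r * (max r 1) ^ (-β)) :=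
    continuous_id.mul (rpow_max_cont β)
  have h01 : IntervalIntegrable (fun r : ℝ => r * (max r 1) ^ (-β)) volume 0 1 :=
    hcont.intervalIntegrable _ _
  have h1R : IntervalIntegrable (fun r : ℝ => r * (max r 1) ^ (-β)) volume 1 R :=
    hcont.intervalIntegrable _ _
  rw [← intervalIntegral.integral_add_adjacent_intervals h01 h1R]
  congr 1
  have e : ∫ x in (0:ℝ)..1, x * (max x 1) ^ (-β) = ∫ x in (0:ℝ)..1, x := by
    apply intervalIntegral.integral_congr
    intro x hx
    rw [Set.uIcc_of_le zero_le_one] at hx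
    simp only [max_eq_right hx.2, Real.one_rpow, mul_one]
  rw [e, integral_id]
  norm_num

lemma tail_int_rpow {β : ℝ} (hβ : β < 2) {R : ℝ} (hR : 1 ≤ R) :
    ∫ x in (1:ℝ)..R, x * (max x 1) ^ (-β)
      = (R ^ ((2:ℝ) - β) - 1) / (2 - β) := by
  have e : ∫ x in (1:ℝ)..R, x * (max x 1) ^ (-β) = ∫ x in (1:ℝ)..R, x ^ ((1:ℝ) - β) := by
    apply intervalIntegral.integral_congr
    intro x hx
    rw [Set.uIcc_of_le hR] at hx
    have hx0 : (0:ℝ) < x := lt_of_lt_of_le one_pos hx.1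
    simp only [max_eq_left hx.1]
    rw [show x * x ^ (-β) = x ^ (1:ℝ) * x ^ (-β) by rw [Real.rpow_one],
      ← Real.rpow_add hx0, show (1:ℝ) + -β = 1 - β by ring]
  rw [e, integral_rpow (Or.inl (by linarith : (-1:ℝ) < 1 - β))]
  rw [Real.one_rpow]
  ring_nf

lemma tail_int_log {R : ℝ} (hR : 1 ≤ R) :
    ∫ x in (1:ℝ)..R, x * (max x 1) ^ (-(2:ℝ)) = Real.log R := by
  have e : ∫ x in (1:ℝ)..R, x * (max x 1) ^ (-(2:ℝ)) = ∫ x in (1:ℝ)..R, x⁻¹ := by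
    apply intervalIntegral.integral_congr
    intro x hx
    rw [Set.uIcc_of_le hR] at hx
    have hx0 : (0:ℝ) < x := lt_of_lt_of_le one_pos hx.1
    simp only [max_eq_left hx.1]
    rw [show (-(2:ℝ)) = (-1) + (-1) by norm_num, Real.rpow_add hx0,
      Real.rpow_neg_one]
    field_simp
  rw [e, integral_inv (by
    rw [Set.uIcc_of_le hR]
    simp only [Set.mem_Icc, not_and]
    intro h; linarith)]
  rw [div_one]

lemma Vol2_nonneg : (0:ℝ) ≤ Vol2 := ENNReal.toReal_nonneg

lemma ball_int_le_rpow {β : ℝ} (hl : 1/2 ≤ β) (hu : β ≤ 3/2) {R : ℝ} (hR : 1 ≤ R) :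
    ∫ u in Metric.closedBall (0 : EuclideanSpace ℝ (Fin 2)) R, (max ‖u‖ 1) ^ (-β)
      ≤ 2 * Vol2 * (3 * R ^ ((2:ℝ) - β)) := by
  rw [ball_int_eq β hR, interval_int_split β hR, tail_int_rpow (by linarith) hR]
  have hRp : (1:ℝ) ≤ R ^ ((2:ℝ) - β) := Real.one_le_rpow hR (by linarith)
  have h1 : (R ^ ((2:ℝ) - β) - 1) / (2 - β) ≤ 2 * R ^ ((2:ℝ) - β) := by
    rw [div_le_iff₀ (by linarith : (0:ℝ) < 2 - β)]
    nlinarith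
  apply mul_le_mul_of_nonneg_left _ (by nlinarith [Vol2_nonneg] : (0:ℝ) ≤ 2 * Vol2)
  linarith

lemma ball_int_le_log {R : ℝ} (hR : 1 ≤ R) :
    ∫ u in Metric.closedBall (0 : EuclideanSpace ℝ (Fin 2)) R, (max ‖u‖ 1) ^ (-(2:ℝ))
      ≤ 2 * Vol2 * (1 + Real.log R) := by
  rw [ball_int_eq 2 hR, interval_int_split 2 hR, tail_int_log hR]
  have hlog : (0:ℝ) ≤ Real.log R := Real.log_nonneg hR
  apply mul_le_mul_of_nonneg_left _ (by nlinarith [Vol2_nonneg] : (0:ℝ) ≤ 2 * Vol2)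
  linarith

/-- For every `a ∈ {0,1,2}` and `b ∈ {1,2,3,4}` there is `C > 0` such that for all `R ≥ 1`:
if `b ≤ 3` then `∫_{‖u‖ ≤ R} |J_a(2π‖u‖)|^b du ≤ C R^{2 − b/2}`, while if `b = 4` then
`∫_{‖u‖ ≤ R} |J_a(2π‖u‖)|⁴ du ≤ C (1 + log R)`. -/
theorem besselJ_power_integral_bound (a : ℕ) (ha : a ≤ 2) (b : ℕ) (hb1 : 1 ≤ b) (hb4 : b ≤ 4) :
    ∃ C : ℝ, 0 < C ∧ ∀ R : ℝ, 1 ≤ R →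
      (b ≤ 3 →
        (∫ u in Metric.closedBall (0 : EuclideanSpace ℝ (Fin 2)) R,
            |besselJ a (2 * Real.pi * ‖u‖)| ^ b) ≤
          C * R ^ ((2 : ℝ) - (b : ℝ) / 2)) ∧
      (b = 4 →
        (∫ u in Metric.closedBall (0 : EuclideanSpace ℝ (Fin 2)) R,
            |besselJ a (2 * Real.pi * ‖u‖)| ^ 4) ≤
          C * (1 + Real.log R)) := by
  obtain ⟨D, hD1, hD⟩ := BesselAux.besselJ_decay a ha
  have hD0 : (0:ℝ) < D := lt_of_lt_of_le one_pos hD1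
  have hV : (0:ℝ) ≤ Vol2 := Vol2_nonneg
  refine ⟨D ^ b * (8 * Vol2) + 1, by positivity, fun R hR => ?_⟩
  have hpt : ∀ u : EuclideanSpace ℝ (Fin 2),
      |besselJ a (2 * Real.pi * ‖u‖)| ^ b ≤ D ^ b * (max ‖u‖ 1) ^ (-((b:ℝ)/2)) := by
    intro u
    have h2pi : (1:ℝ) ≤ 2 * Real.pi := by nlinarith [Real.pi_gt_three]
    have h1 : |besselJ a (2 * Real.pi * ‖u‖)| ≤ D * (max (2 * Real.pi * ‖u‖) 1) ^ (-(1/2) : ℝ) :=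
      hD _ (by positivity)
    have h2 : max ‖u‖ 1 ≤ max (2 * Real.pi * ‖u‖) 1 :=
      max_le_max (le_mul_of_one_le_left (norm_nonneg u) h2pi) le_rfl
    have hmaxpos : (0:ℝ) < max ‖u‖ 1 := lt_of_lt_of_le one_pos (le_max_right _ _)
    have h3 : (max (2 * Real.pi * ‖u‖) 1) ^ (-(1/2) : ℝ) ≤ (max ‖u‖ 1) ^ (-(1/2) : ℝ) :=
      Real.rpow_le_rpow_of_nonpos hmaxpos h2 (by norm_num)
    have h4 : |besselJ a (2 * Real.pi * ‖u‖)| ≤ D * (max ‖u‖ 1) ^ (-(1/2) : ℝ) :=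
      h1.trans (mul_le_mul_of_nonneg_left h3 (by linarith))
    calc |besselJ a (2 * Real.pi * ‖u‖)| ^ b
        ≤ (D * (max ‖u‖ 1) ^ (-(1/2) : ℝ)) ^ b := pow_le_pow_left₀ (abs_nonneg _) h4 b
      _ = D ^ b * ((max ‖u‖ 1) ^ (-(1/2) : ℝ)) ^ b := mul_pow _ _ _
      _ = D ^ b * (max ‖u‖ 1) ^ (-((b:ℝ)/2)) := by
          rw [← Real.rpow_natCast ((max ‖u‖ 1) ^ (-(1/2) : ℝ)) b,
            ← Real.rpow_mul hmaxpos.le]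
          congr 1
          ring
  have hcomp : ∀ β : ℝ, (∀ u : EuclideanSpace ℝ (Fin 2),
        |besselJ a (2 * Real.pi * ‖u‖)| ^ b ≤ D ^ b * (max ‖u‖ 1) ^ (-β)) →
      (∫ u in Metric.closedBall (0 : EuclideanSpace ℝ (Fin 2)) R,
          |besselJ a (2 * Real.pi * ‖u‖)| ^ b)
        ≤ D ^ b * ∫ u in Metric.closedBall (0 : EuclideanSpace ℝ (Fin 2)) R,
            (max ‖u‖ 1) ^ (-β) := by
    intro β hβ
    rw [← MeasureTheory.integral_const_mul]
    apply MeasureTheory.integral_mono_of_nonneg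
    · exact Filter.Eventually.of_forall fun u => by positivity
    · apply ContinuousOn.integrableOn_compact (isCompact_closedBall _ _)
      exact (continuous_const.mul ((rpow_max_cont β).comp continuous_norm)).continuousOn
    · exact Filter.Eventually.of_forall hβ
  constructor
  · intro hb3
    have hl : (1:ℝ)/2 ≤ (b:ℝ)/2 := by
      have : (1:ℝ) ≤ (b:ℝ) := by exact_mod_cast hb1
      linarith
    have hu : (b:ℝ)/2 ≤ 3/2 := by
      have : (b:ℝ) ≤ 3 := by exact_mod_cast hb3
      linarith
    have hRp : (0:ℝ) ≤ R ^ ((2:ℝ) - (b:ℝ)/2) :=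
      Real.rpow_nonneg (by linarith) _
    calc (∫ u in Metric.closedBall (0 : EuclideanSpace ℝ (Fin 2)) R,
            |besselJ a (2 * Real.pi * ‖u‖)| ^ b)
        ≤ D ^ b * ∫ u in Metric.closedBall (0 : EuclideanSpace ℝ (Fin 2)) R,
            (max ‖u‖ 1) ^ (-((b:ℝ)/2)) := hcomp _ hpt
      _ ≤ D ^ b * (2 * Vol2 * (3 * R ^ ((2:ℝ) - (b:ℝ)/2))) := by
          apply mul_le_mul_of_nonneg_left (ball_int_le_rpow hl hu hR) (by positivity)
      _ ≤ (D ^ b * (8 * Vol2) + 1) * R ^ ((2:ℝ) - (b:ℝ)/2) := by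
          have hDb : (0:ℝ) ≤ D ^ b := by positivity
          nlinarith [mul_nonneg (mul_nonneg hDb hV) hRp]
  · intro hb4'
    subst hb4'
    have hexp : ∀ u : EuclideanSpace ℝ (Fin 2),
        D ^ 4 * (max ‖u‖ 1) ^ (-(((4:ℕ):ℝ)/2)) = D ^ 4 * (max ‖u‖ 1) ^ (-(2:ℝ)) := by
      intro u
      norm_num
    have hpt' : ∀ u : EuclideanSpace ℝ (Fin 2),
        |besselJ a (2 * Real.pi * ‖u‖)| ^ 4 ≤ D ^ 4 * (max ‖u‖ 1) ^ (-(2:ℝ)) := by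
      intro u
      have := hpt u
      rw [hexp u] at this
      exact this
    have hlog : (0:ℝ) ≤ Real.log R := Real.log_nonneg hR
    calc (∫ u in Metric.closedBall (0 : EuclideanSpace ℝ (Fin 2)) R,
            |besselJ a (2 * Real.pi * ‖u‖)| ^ 4)
        ≤ D ^ 4 * ∫ u in Metric.closedBall (0 : EuclideanSpace ℝ (Fin 2)) R,
            (max ‖u‖ 1) ^ (-(2:ℝ)) := hcomp 2 hpt'
      _ ≤ D ^ 4 * (2 * Vol2 * (1 + Real.log R)) := by
          apply mul_le_mul_of_nonneg_left (ball_int_le_log hR) (by positivity)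
      _ ≤ (D ^ 4 * (8 * Vol2) + 1) * (1 + Real.log R) := by
          have hDb : (0:ℝ) ≤ D ^ 4 := by positivity
          nlinarith [mul_nonneg (mul_nonneg hDb hV) hlog]
end
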